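/- Let $G$ be a finite group, $N \trianglelefteq G$, $x \in G$, and suppose $\gcd(|x^G|, |N|) = 1$. Then $N \leq C_G(x)$. -/

import Mathlib

theorem normal_le_centralizer_of_coprime {G : Type*} [Group G] [Finite G]
    (N : Subgroup G) [N.Normal] (x : G)
    (hcop : Nat.Coprime (Nat.card {y : G | IsConj x y}) (Nat.card N)) :
    N ≤ Subgroup.centralizer {x} := by
  set H := Subgroup.centralizer ({x} : Set G) with hHdef
  -- cardinality of the conjugacy class is the index of the centralizer
  have hset : {y : G | IsConj x y} = MulAction.orbit (ConjAct G) x := by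
    ext y
    rw [Set.mem_setOf_eq, MulAction.mem_orbit_iff, isConj_iff]
    simp only [ConjAct.smul_def]
    constructor
    · rintro ⟨c, rfl⟩
      exact ⟨ConjAct.toConjAct c, by simp⟩
    · rintro ⟨c, rfl⟩
      exact ⟨ConjAct.ofConjAct c, rfl⟩
  have hcard : Nat.card {y : G | IsConj x y} = H.index := by
    rw [hset, Nat.card_coe_set_eq, ← MulAction.index_stabilizer, hHdef,
      Subgroup.centralizer_eq_comap_stabilizer]
    exact (Subgroup.index_comap_of_surjective (f := (ConjAct.toConjAct : G ≃* ConjAct G).toMonoidHom) _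
        ConjAct.toConjAct.surjective).symm
  -- card of subgroupOf
  have cardof : ∀ (A B : Subgroup G),
      Nat.card (A.subgroupOf B) = Nat.card (A ⊓ B : Subgroup G) := by
    intro A B
    rw [← Subgroup.inf_subgroupOf_right]
    exact Nat.card_congr (Subgroup.subgroupOfEquivOfLe inf_le_right).toEquiv
  have hb : 0 < Nat.card (H ⊓ N : Subgroup G) := Nat.card_pos
  have ha : 0 < Nat.card H := Nat.card_pos
  have e1 : H.relIndex N * Nat.card (H ⊓ N : Subgroup G) = Nat.card N := by
    have h := Subgroup.index_mul_card (H.subgroupOf N)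
    rwa [cardof H N] at h
  have e2 : N.relIndex H * Nat.card (H ⊓ N : Subgroup G) = Nat.card H := by
    have h := Subgroup.index_mul_card (N.subgroupOf H)
    rwa [cardof N H, inf_comm] at h
  have e3 : N.relIndex (H ⊔ N) * Nat.card N = Nat.card (H ⊔ N : Subgroup G) := by
    have h := Subgroup.index_mul_card (N.subgroupOf (H ⊔ N))
    rwa [cardof N (H ⊔ N), inf_of_le_left le_sup_right] at h
  have e4 : H.relIndex (H ⊔ N) * Nat.card H = Nat.card (H ⊔ N : Subgroup G) := by
    have h := Subgroup.index_mul_card (H.subgroupOf (H ⊔ N))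
    rwa [cardof H (H ⊔ N), inf_of_le_left le_sup_left] at h
  have e5 : N.relIndex (H ⊔ N) = N.relIndex H := Subgroup.relIndex_sup_right H N
  -- conclude H.relindex N = H.relindex (H ⊔ N)
  have hu : N.relIndex H ≠ 0 := by
    intro h0
    rw [h0, zero_mul] at e2
    omega
  have key : H.relIndex N = H.relIndex (H ⊔ N) := by
    have : H.relIndex (H ⊔ N) * (N.relIndex H * Nat.card (H ⊓ N : Subgroup G))
        = N.relIndex H * Nat.card N := by
      rw [e2, e4, ← e5, e3]
    have h2 : H.relIndex (H ⊔ N) * Nat.card (H ⊓ N : Subgroup G)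
        = Nat.card N := by
      have := this
      rw [show H.relIndex (H ⊔ N) * (N.relIndex H * Nat.card (H ⊓ N : Subgroup G))
          = N.relIndex H * (H.relIndex (H ⊔ N) * Nat.card (H ⊓ N : Subgroup G)) by ring] at this
      exact Nat.eq_of_mul_eq_mul_left (Nat.pos_of_ne_zero hu) this
    have := e1.trans h2.symm
    exact Nat.eq_of_mul_eq_mul_right hb this
  -- divisibility
  have hdvd1 : H.relIndex N ∣ H.index := key ▸ Subgroup.relIndex_dvd_index_of_le le_sup_left
  have hdvd2 : H.relIndex N ∣ Nat.card N := ⟨_, e1.symm⟩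
  have : H.relIndex N = 1 := Nat.eq_one_of_dvd_coprimes (hcard ▸ hcop) hdvd1 hdvd2
  exact Subgroup.relIndex_eq_one.mp this
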